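/- For F(x) = cosh x − 1 and G(y) = cosh y − 1, the identity M(x,y) = −(cosh x − 1)²(cosh y − 1)²·(cosh²x − cosh x·cosh y + 2cosh y + 2) holds for all x, y ∈ ℝ. -/
import Mathlib


/-- The function `M(x,y)` built from `F` and `G`. -/
noncomputable def Mfun (F G : ℝ → ℝ) (x y : ℝ) : ℝ :=
  (6 * F x * (deriv (deriv F) x) ^ 2 - 3 * (deriv F x) ^ 2 * deriv (deriv F) x
      - 2 * F x * deriv F x * deriv (deriv (deriv F)) x) * G y * (deriv G y) ^ 2
    + F x * (deriv F x) ^ 2 * deriv (deriv F) x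
      * ((deriv G y) ^ 2 - 2 * G y * deriv (deriv G) y)

lemma deriv_cosh_sub_one : deriv (fun x : ℝ => Real.cosh x - 1) = Real.sinh := by
  funext x
  rw [deriv_sub_const]
  rw [Real.deriv_cosh]

theorem stmt17 (x y : ℝ) :
    Mfun (fun x => Real.cosh x - 1) (fun y => Real.cosh y - 1) x y =
      -((Real.cosh x - 1) ^ 2 * (Real.cosh y - 1) ^ 2
        * (Real.cosh x ^ 2 - Real.cosh x * Real.cosh y + 2 * Real.cosh y + 2)) := by
  have h1 : deriv (fun x : ℝ => Real.cosh x - 1) = Real.sinh := deriv_cosh_sub_one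
  simp only [Mfun, h1, Real.deriv_sinh, Real.deriv_cosh]
  have hsx : Real.sinh x ^ 2 = Real.cosh x ^ 2 - 1 := Real.sinh_sq x
  have hsy : Real.sinh y ^ 2 = Real.cosh y ^ 2 - 1 := Real.sinh_sq y
  ring_nf
  rw [hsx, hsy]
  ring
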